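/- In a uniform level-L refinement of the type-0 root triangle, each level-L subtriangle of type 0 that is a descendant of the level-1 child T_3 (the type-1 child of the root) is a face-neighbor of a level-L subtriangle of type 1 that comes strictly later in the TM order. -/

import Mathlib

/-- Points of the plane. -/
abbrev TMV : Type := Fin 2 → ℝ

/-- Midpoint of two points of the plane. -/
noncomputable def tmMid (a b : TMV) : TMV := (1 / 2 : ℝ) • (a + b)

/-- Bey's refinement: the four children of a triangle `[x 0, x 1, x 2]`. -/
noncomputable def beyChild (x : Fin 3 → TMV) : Fin 4 → Fin 3 → TMV :=
  ![![x 0, tmMid (x 0) (x 1), tmMid (x 0) (x 2)],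
    ![tmMid (x 0) (x 1), x 1, tmMid (x 1) (x 2)],
    ![tmMid (x 0) (x 2), tmMid (x 1) (x 2), x 2],
    ![tmMid (x 0) (x 1), tmMid (x 0) (x 2), tmMid (x 1) (x 2)]]

/-- The vertices of the subtriangle of the root `x` reached by the successive
child choices recorded in the list `p`. -/
noncomputable def tmVerts (x : Fin 3 → TMV) : List (Fin 4) → Fin 3 → TMV
  | [] => x
  | i :: p => tmVerts (beyChild x i) p

/-- The type of the subtriangle reached by path `p` from a root of type `τ`:
children `T_0, T_1, T_2` inherit the parent's type, `T_3` has the opposite type. -/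
def tmType (τ : Fin 2) : List (Fin 4) → Fin 2
  | [] => τ
  | i :: p => tmType (if i = 3 then 1 - τ else τ) p

/-- The position of Bey child `i` in the TM traversal order of the children of a
parent of type `b`: order `T_0, T_1, T_3, T_2` for type 0 and `T_0, T_3, T_1, T_2`
for type 1. -/
def tmChildRank (b : Fin 2) : Fin 4 → Fin 4 :=
  if b = 0 then ![0, 1, 3, 2] else ![0, 2, 3, 1]

/-- The TM index of the level-`p.length` subtriangle given by path `p` from a root
of type `τ`, among all subtriangles of that level. -/
def tmIndex (τ : Fin 2) : List (Fin 4) → ℕ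
  | [] => 0
  | i :: p => (tmChildRank τ i : ℕ) * 4 ^ p.length + tmIndex (if i = 3 then 1 - τ else τ) p

/-- The closed triangle spanned by the three vertices. -/
def triSet (x : Fin 3 → TMV) : Set TMV := convexHull ℝ {x 0, x 1, x 2}

/-- `e` is a complete edge of the triangle with vertices `x`. -/
def triIsEdge (x : Fin 3 → TMV) (e : Set TMV) : Prop :=
  ∃ i j : Fin 3, i ≠ j ∧ e = segment ℝ (x i) (x j)

/-- Two triangles are face-neighbors if their intersection is a complete edge of both. -/
def triFaceNbr (x y : Fin 3 → TMV) : Prop :=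
  ∃ e, triIsEdge x e ∧ triIsEdge y e ∧ triSet x ∩ triSet y = e

/-- A set `S` of subtriangle paths (with root vertices `x0`) is face-connected. -/
def triFaceConnected (x0 : Fin 3 → TMV) (S : Set (List (Fin 4))) : Prop :=
  ∀ p ∈ S, ∀ q ∈ S,
    Relation.ReflTransGen
      (fun a b => a ∈ S ∧ b ∈ S ∧ triFaceNbr (tmVerts x0 a) (tmVerts x0 b)) p q

/-- `S` has at most `n` face-connected components. -/
def triCompBound (x0 : Fin 3 → TMV) (S : Set (List (Fin 4))) (n : ℕ) : Prop :=
  ∃ f : Fin n → Set (List (Fin 4)), S = ⋃ i, f i ∧ ∀ i, triFaceConnected x0 (f i)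

/-- `S` is a contiguous segment of the TM curve through the uniform level-`L`
refinement of a root of type `τ`: a set of level-`L` paths forming an interval
in the TM order. -/
def tmSegment (τ : Fin 2) (L : ℕ) (S : Set (List (Fin 4))) : Prop :=
  (∀ p ∈ S, p.length = L) ∧
  ∀ p q r : List (Fin 4), p.length = L → q.length = L → r.length = L →
    p ∈ S → r ∈ S → tmIndex τ p ≤ tmIndex τ q → tmIndex τ q ≤ tmIndex τ r → q ∈ S

-- append lemmas
lemma tmVerts_append (x : Fin 3 → TMV) (s : List (Fin 4)) (c : Fin 4) :
    tmVerts x (s ++ [c]) = beyChild (tmVerts x s) c := by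
  induction s generalizing x with
  | nil => rfl
  | cons a s ih => simpa [tmVerts] using ih (beyChild x a)

lemma tmType_append (τ : Fin 2) (s : List (Fin 4)) (c : Fin 4) :
    tmType τ (s ++ [c]) = if c = 3 then 1 - tmType τ s else tmType τ s := by
  induction s generalizing τ with
  | nil => rfl
  | cons a s ih => simpa [tmType] using ih _

lemma tmIndex_append (τ : Fin 2) (s : List (Fin 4)) (c : Fin 4) :
    tmIndex τ (s ++ [c]) = 4 * tmIndex τ s + (tmChildRank (tmType τ s) c : ℕ) := by
  induction s generalizing τ with
  | nil => simp [tmIndex, tmType]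
  | cons a s ih =>
      simp only [List.cons_append, tmIndex, tmType, ih]
      have : (s ++ [c]).length = s.length + 1 := by simp
      rw [this]
      ring

-- midpoint algebra
lemma tmMid_comm (a b : TMV) : tmMid a b = tmMid b a := by funext t; simp [tmMid]; ring
lemma tmMid_A2 (a b c : TMV) : tmMid a b + tmMid a c - a = tmMid b c := by
  funext t; simp [tmMid]; ring
lemma tmMid_A4 (a b c : TMV) : tmMid a b + tmMid b c - tmMid a c = b := by
  funext t; simp [tmMid]; ring
lemma tmMid_A5 (a b c : TMV) : tmMid a c + c - tmMid b c = tmMid (a + c - b) c := by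
  funext t; simp [tmMid]; ring

-- affine independence via explicit weights
lemma ai3_iff (y : Fin 3 → TMV) :
    AffineIndependent ℝ y ↔
      ∀ w : Fin 3 → ℝ, w 0 + w 1 + w 2 = 0 →
        w 0 • y 0 + w 1 • y 1 + w 2 • y 2 = 0 → ∀ t, w t = 0 := by
  rw [affineIndependent_iff]
  constructor
  · intro h w hw hc t
    exact h Finset.univ w (by simpa [Fin.sum_univ_three] using hw)
      (by simpa [Fin.sum_univ_three] using hc) t (Finset.mem_univ t)
  · intro h s w hw hc e he
    set w' : Fin 3 → ℝ := fun j => if j ∈ s then w j else 0 with hw'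
    have hs1 : w' 0 + w' 1 + w' 2 = 0 := by
      have : ∑ j, w' j = ∑ j ∈ s, w j := by
        rw [Finset.sum_ite_mem, Finset.univ_inter]
      rw [← hw, ← this, Fin.sum_univ_three]
    have hs2 : w' 0 • y 0 + w' 1 • y 1 + w' 2 • y 2 = 0 := by
      have : ∑ j, w' j • y j = ∑ j ∈ s, w j • y j := by
        rw [show ∑ j ∈ s, w j • y j = ∑ j ∈ s, w' j • y j from
          Finset.sum_congr rfl fun j hj => by simp [w', hj]]
        exact (Finset.sum_subset (Finset.subset_univ s)
          (fun j _ hj => by simp [w', hj])).symm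
      rw [← hc, ← this, Fin.sum_univ_three]
    have := h w' hs1 hs2 e
    simpa [w', he] using this

lemma beyChild_ai {x : Fin 3 → TMV} (hx : AffineIndependent ℝ x) (i : Fin 4) :
    AffineIndependent ℝ (beyChild x i) := by
  have hx' := (ai3_iff x).mp hx
  rw [ai3_iff]
  intro w hw hc t
  fin_cases i
  · -- child 0
    have hc' : (w 0 + w 1/2 + w 2/2) • x 0 + (w 1/2) • x 1 + (w 2/2) • x 2 = 0 := by
      rw [← hc]; funext s; simp [beyChild, tmMid]; ring
    have h0 := hx' ![w 0 + w 1/2 + w 2/2, w 1/2, w 2/2] (by simp; linarith) (by simpa using hc')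
    have e0 := h0 0; have e1 := h0 1; have e2 := h0 2
    simp at e0 e1 e2
    fin_cases t <;> simp <;> linarith
  · have hc' : (w 0/2) • x 0 + (w 0/2 + w 1 + w 2/2) • x 1 + (w 2/2) • x 2 = 0 := by
      rw [← hc]; funext s; simp [beyChild, tmMid]; ring
    have h0 := hx' ![w 0/2, w 0/2 + w 1 + w 2/2, w 2/2] (by simp; linarith) (by simpa using hc')
    have e0 := h0 0; have e1 := h0 1; have e2 := h0 2
    simp at e0 e1 e2
    fin_cases t <;> simp <;> linarith
  · have hc' : (w 0/2) • x 0 + (w 1/2) • x 1 + (w 0/2 + w 1/2 + w 2) • x 2 = 0 := by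
      rw [← hc]; funext s; simp [beyChild, tmMid]; ring
    have h0 := hx' ![w 0/2, w 1/2, w 0/2 + w 1/2 + w 2] (by simp; linarith) (by simpa using hc')
    have e0 := h0 0; have e1 := h0 1; have e2 := h0 2
    simp at e0 e1 e2
    fin_cases t <;> simp <;> linarith
  · have hc' : (w 0/2 + w 1/2) • x 0 + (w 0/2 + w 2/2) • x 1 + (w 1/2 + w 2/2) • x 2 = 0 := by
      rw [← hc]; funext s; simp [beyChild, tmMid]; ring
    have h0 := hx' ![w 0/2 + w 1/2, w 0/2 + w 2/2, w 1/2 + w 2/2] (by simp; linarith)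
      (by simpa using hc')
    have e0 := h0 0; have e1 := h0 1; have e2 := h0 2
    simp at e0 e1 e2
    fin_cases t <;> simp <;> linarith

lemma tmVerts_ai {x : Fin 3 → TMV} (hx : AffineIndependent ℝ x) (p : List (Fin 4)) :
    AffineIndependent ℝ (tmVerts x p) := by
  induction p generalizing x with
  | nil => exact hx
  | cons a p ih => exact ih (beyChild_ai hx a)

lemma ai_perm {x : Fin 3 → TMV} (hx : AffineIndependent ℝ x) (i j k : Fin 3)
    (hij : i ≠ j) (hik : i ≠ k) (hjk : j ≠ k) :
    AffineIndependent ℝ ![x i, x j, x k] := by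
  have hinj : Function.Injective (![i, j, k] : Fin 3 → Fin 3) := by
    intro a b hab
    fin_cases a <;> fin_cases b <;> simp_all
  have := hx.comp_embedding ⟨![i, j, k], hinj⟩
  convert this using 1
  funext t; fin_cases t <;> rfl

lemma hull_decomp (a b c : TMV) :
    convexHull ℝ ({a, b, c} : Set TMV) = ⋃ y ∈ segment ℝ b c, segment ℝ a y := by
  rw [show ({a, b, c} : Set TMV) = insert a {b, c} from rfl,
    convexHull_insert ⟨b, by simp⟩, convexHull_pair, convexJoin_singleton_left]

lemma hull_inter (a b c : TMV) (h : AffineIndependent ℝ ![a, b, c]) :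
    convexHull ℝ ({a, b, c} : Set TMV) ∩ convexHull ℝ ({a, b, a + b - c} : Set TMV)
      = segment ℝ a b := by
  have hcard : Fintype.card (Fin 3) = Module.finrank ℝ TMV + 1 := by
    simp [Module.finrank_fin_fun]
  have hspan : affineSpan ℝ (Set.range ![a, b, c]) = ⊤ :=
    h.affineSpan_eq_top_iff_card_eq_finrank_add_one.mpr hcard
  let B : AffineBasis (Fin 3) ℝ TMV := ⟨![a, b, c], h, hspan⟩
  let f : TMV →ᵃ[ℝ] ℝ := B.coord 2
  have hBa : B 0 = a := rfl
  have hBb : B 1 = b := rfl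
  have hBc : B 2 = c := rfl
  have hfa : f a = 0 := by rw [← hBa]; exact B.coord_apply_ne (by decide)
  have hfb : f b = 0 := by rw [← hBb]; exact B.coord_apply_ne (by decide)
  have hfc : f c = 1 := by rw [← hBc]; exact B.coord_apply_eq 2
  have hlin : f.linear (a - c) = -1 := by
    have := f.map_vadd c (a - c)
    simp only [vadd_eq_add, sub_add_cancel] at this
    rw [this, hfc] at hfa
    linarith [hfa]
  have hfd : f (a + b - c) = -1 := by
    have := f.map_vadd b (a - c)
    rw [show (a - c) +ᵥ b = a + b - c by funext t; simp [vadd_eq_add]; ring] at this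
    rw [this, hlin, hfb]; simp
  apply Set.Subset.antisymm
  · rintro x ⟨hx1, hx2⟩
    rw [hull_decomp] at hx1 hx2
    simp only [Set.mem_iUnion, exists_prop] at hx1 hx2
    obtain ⟨y, hy, hxy⟩ := hx1
    obtain ⟨y', hy', hxy'⟩ := hx2
    obtain ⟨α, β, hα, hβ, hαβ, rfl⟩ := hxy
    obtain ⟨γ, δ, hγ, hδ, hγδ, rfl⟩ := hy
    have hfx : f (α • a + β • (γ • b + δ • c)) = β * δ := by
      rw [Convex.combo_affine_apply hαβ, Convex.combo_affine_apply hγδ, hfa, hfb, hfc]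
      simp [smul_eq_mul]
    obtain ⟨α', β', hα', hβ', hαβ', hx'⟩ := hxy'
    obtain ⟨γ', δ', hγ', hδ', hγδ', rfl⟩ := hy'
    have hfx' : f (α • a + β • (γ • b + δ • c)) = -(β' * δ') := by
      rw [← hx', Convex.combo_affine_apply hαβ', Convex.combo_affine_apply hγδ',
        hfa, hfb, hfd]
      simp [smul_eq_mul]
    have hβδ : β * δ = 0 := by
      have h1 : (0:ℝ) ≤ β * δ := mul_nonneg hβ hδ
      have h2 : (0:ℝ) ≤ β' * δ' := mul_nonneg hβ' hδ'
      nlinarith [hfx, hfx', hfx.symm.trans hfx']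
    rcases mul_eq_zero.mp hβδ with h0 | h0
    · have : α = 1 := by linarith
      rw [h0, this]
      simpa using left_mem_segment ℝ a b
    · have : γ = 1 := by linarith
      rw [h0, this]
      exact ⟨α, β, hα, hβ, hαβ, by simp⟩
  · apply Set.subset_inter <;>
      · rw [← convexHull_pair]
        apply convexHull_mono
        intro z hz
        rcases hz with rfl | rfl <;> simp


/-- `y` is the reflection of `x` across the edge `{x u, x 2}`, `w` the remaining index. -/
def reflW (x y : Fin 3 → TMV) (u w : Fin 3) : Prop :=
  ∃ i j k : Fin 3, i ≠ j ∧ i ≠ k ∧ j ≠ k ∧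
    y i = x u ∧ y j = x 2 ∧ y k = x u + x 2 - x w

lemma permset (y : Fin 3 → TMV) (i j k : Fin 3) (hij : i ≠ j) (hik : i ≠ k) (hjk : j ≠ k) :
    ({y 0, y 1, y 2} : Set TMV) = {y i, y j, y k} := by
  fin_cases i <;> fin_cases j <;> fin_cases k <;> simp_all <;>
    · ext z; simp; tauto

lemma faceNbr_aux (x y : Fin 3 → TMV) (u w : Fin 3) (hu : u ≠ 2)
    (hset : ({x 0, x 1, x 2} : Set TMV) = {x u, x 2, x w})
    (hai : AffineIndependent ℝ ![x u, x 2, x w])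
    (h : reflW x y u w) : triFaceNbr x y := by
  obtain ⟨i, j, k, hij, hik, hjk, h1, h2, h3⟩ := h
  refine ⟨segment ℝ (x u) (x 2), ⟨u, 2, hu, rfl⟩, ⟨i, j, hij, by rw [h1, h2]⟩, ?_⟩
  have hyset : ({y 0, y 1, y 2} : Set TMV) = {y i, y j, y k} := permset y i j k hij hik hjk
  unfold triSet
  rw [hset, hyset, h1, h2, h3]
  exact hull_inter (x u) (x 2) (x w) hai

lemma faceNbr_of_reflW (x y : Fin 3 → TMV) (hx : AffineIndependent ℝ x)
    (h : reflW x y 0 1 ∨ reflW x y 1 0) : triFaceNbr x y := by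
  rcases h with h | h
  · refine faceNbr_aux x y 0 1 (by decide) ?_ ?_ h
    · ext z; simp; tauto
    · exact ai_perm hx 0 2 1 (by decide) (by decide) (by decide)
  · refine faceNbr_aux x y 1 0 (by decide) ?_ ?_ h
    · ext z; simp; tauto
    · exact ai_perm hx 1 2 0 (by decide) (by decide) (by decide)


section Corner
variable (y : Fin 3 → TMV)

private lemma corner012 : ∃ c : Fin 4, c ≠ 3 ∧ ∃ i' j' k' : Fin 3, i' ≠ j' ∧ i' ≠ k' ∧ j' ≠ k' ∧
    beyChild y c i' = tmMid (y 0) (y 1) ∧ beyChild y c j' = y 1 ∧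
    beyChild y c k' = tmMid (y 2) (y 1) := by
  refine ⟨1, by decide, 0, 1, 2, by decide, by decide, by decide, ?_, ?_, ?_⟩
  · simp [beyChild]
  · simp [beyChild]
  · simp [beyChild, tmMid_comm (y 1) (y 2)]

private lemma corner021 : ∃ c : Fin 4, c ≠ 3 ∧ ∃ i' j' k' : Fin 3, i' ≠ j' ∧ i' ≠ k' ∧ j' ≠ k' ∧
    beyChild y c i' = tmMid (y 0) (y 2) ∧ beyChild y c j' = y 2 ∧
    beyChild y c k' = tmMid (y 1) (y 2) := by
  refine ⟨2, by decide, 0, 2, 1, by decide, by decide, by decide, ?_, ?_, ?_⟩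
  · simp [beyChild]
  · simp [beyChild]
  · simp [beyChild]

private lemma corner102 : ∃ c : Fin 4, c ≠ 3 ∧ ∃ i' j' k' : Fin 3, i' ≠ j' ∧ i' ≠ k' ∧ j' ≠ k' ∧
    beyChild y c i' = tmMid (y 1) (y 0) ∧ beyChild y c j' = y 0 ∧
    beyChild y c k' = tmMid (y 2) (y 0) := by
  refine ⟨0, by decide, 1, 0, 2, by decide, by decide, by decide, ?_, ?_, ?_⟩
  · simp [beyChild, tmMid_comm (y 0) (y 1)]
  · simp [beyChild]
  · simp [beyChild, tmMid_comm (y 0) (y 2)]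

private lemma corner120 : ∃ c : Fin 4, c ≠ 3 ∧ ∃ i' j' k' : Fin 3, i' ≠ j' ∧ i' ≠ k' ∧ j' ≠ k' ∧
    beyChild y c i' = tmMid (y 1) (y 2) ∧ beyChild y c j' = y 2 ∧
    beyChild y c k' = tmMid (y 0) (y 2) := by
  refine ⟨2, by decide, 1, 2, 0, by decide, by decide, by decide, ?_, ?_, ?_⟩
  · simp [beyChild]
  · simp [beyChild]
  · simp [beyChild]

private lemma corner201 : ∃ c : Fin 4, c ≠ 3 ∧ ∃ i' j' k' : Fin 3, i' ≠ j' ∧ i' ≠ k' ∧ j' ≠ k' ∧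
    beyChild y c i' = tmMid (y 2) (y 0) ∧ beyChild y c j' = y 0 ∧
    beyChild y c k' = tmMid (y 1) (y 0) := by
  refine ⟨0, by decide, 2, 0, 1, by decide, by decide, by decide, ?_, ?_, ?_⟩
  · simp [beyChild, tmMid_comm (y 0) (y 2)]
  · simp [beyChild]
  · simp [beyChild, tmMid_comm (y 0) (y 1)]

private lemma corner210 : ∃ c : Fin 4, c ≠ 3 ∧ ∃ i' j' k' : Fin 3, i' ≠ j' ∧ i' ≠ k' ∧ j' ≠ k' ∧
    beyChild y c i' = tmMid (y 2) (y 1) ∧ beyChild y c j' = y 1 ∧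
    beyChild y c k' = tmMid (y 0) (y 1) := by
  refine ⟨1, by decide, 2, 1, 0, by decide, by decide, by decide, ?_, ?_, ?_⟩
  · simp [beyChild, tmMid_comm (y 1) (y 2)]
  · simp [beyChild]
  · simp [beyChild]

lemma corner (i j k : Fin 3) (hij : i ≠ j) (hik : i ≠ k) (hjk : j ≠ k) :
    ∃ c : Fin 4, c ≠ 3 ∧ ∃ i' j' k' : Fin 3, i' ≠ j' ∧ i' ≠ k' ∧ j' ≠ k' ∧
      beyChild y c i' = tmMid (y i) (y j) ∧ beyChild y c j' = y j ∧
      beyChild y c k' = tmMid (y k) (y j) := by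
  fin_cases i <;> fin_cases j <;> fin_cases k <;>
    first
      | exact absurd rfl hij
      | exact absurd rfl hik
      | exact absurd rfl hjk
      | exact corner012 y
      | exact corner021 y
      | exact corner102 y
      | exact corner120 y
      | exact corner201 y
      | exact corner210 y

end Corner

lemma tmMid_A3 (a b c : TMV) : tmMid a b + tmMid b c - b = tmMid a c := by
  funext t; simp [tmMid]; ring

lemma fin2_cases (b : Fin 2) : b = 0 ∨ b = 1 := by revert b; decide

lemma tm_main (x0 : Fin 3 → TMV) (rest : List (Fin 4)) :
    tmType 0 (3 :: rest) = 0 →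
    ∃ q : List (Fin 4), q.length = rest.length + 1 ∧ tmType 0 q = 1 ∧
      tmIndex 0 (3 :: rest) < tmIndex 0 q ∧
      (reflW (tmVerts x0 (3 :: rest)) (tmVerts x0 q) 0 1 ∨
       reflW (tmVerts x0 (3 :: rest)) (tmVerts x0 q) 1 0) := by
  induction rest using List.reverseRecOn with
  | nil => intro h; simp [tmType] at h
  | append_singleton r i ih =>
    intro hty
    have hgoalEq : (3 :: (r ++ [i]) : List (Fin 4)) = (3 :: r) ++ [i] := rfl
    rw [hgoalEq] at hty ⊢
    set s : List (Fin 4) := 3 :: r with hs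
    set xs : Fin 3 → TMV := tmVerts x0 s with hxs
    have hvp : tmVerts x0 (s ++ [i]) = beyChild xs i := tmVerts_append x0 s i
    have h4 : ∀ c : Fin 4, c = 0 ∨ c = 1 ∨ c = 2 ∨ c = 3 := by decide
    rcases h4 i with rfl | rfl | rfl | rfl
    · -- i = 0
      have hb : tmType 0 s = 0 := by
        rw [tmType_append] at hty; simpa using hty
      refine ⟨s ++ [3], by simp [hs], ?_, ?_, ?_⟩
      · rw [tmType_append, hb]; simp
      · rw [tmIndex_append, tmIndex_append, hb]
        have e1 : ((tmChildRank 0 0 : Fin 4) : ℕ) = 0 := rfl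
        have e2 : ((tmChildRank 0 3 : Fin 4) : ℕ) = 2 := rfl
        omega
      · right
        rw [hvp, tmVerts_append]
        exact ⟨0, 1, 2, by decide, by decide, by decide,
          by simp [beyChild]; rfl, by simp [beyChild]; rfl,
          by simp [beyChild]; exact (tmMid_A2 (xs 0) (xs 1) (xs 2)).symm⟩
    · -- i = 1
      have hb : tmType 0 s = 0 := by
        rw [tmType_append] at hty; simpa using hty
      refine ⟨s ++ [3], by simp [hs], ?_, ?_, ?_⟩
      · rw [tmType_append, hb]; simp
      · rw [tmIndex_append, tmIndex_append, hb]
        have e1 : ((tmChildRank 0 1 : Fin 4) : ℕ) = 1 := rfl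
        have e2 : ((tmChildRank 0 3 : Fin 4) : ℕ) = 2 := rfl
        omega
      · left
        rw [hvp, tmVerts_append]
        exact ⟨0, 2, 1, by decide, by decide, by decide,
          by simp [beyChild]; rfl, by simp [beyChild]; rfl,
          by simp [beyChild]; exact (tmMid_A3 (xs 0) (xs 1) (xs 2)).symm⟩
    · -- i = 2 : the hard case
      have hb : tmType 0 s = 0 := by
        rw [tmType_append] at hty; simpa using hty
      obtain ⟨q', hlen', hty', hidx', hrefl'⟩ := ih hb
      set xq' : Fin 3 → TMV := tmVerts x0 q' with hxq'
      have hidxp : tmIndex 0 (s ++ [2]) = 4 * tmIndex 0 s + 3 := by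
        rw [tmIndex_append, hb]; rfl
      rcases hrefl' with h | h
      · -- reflW xs xq' 0 1
        obtain ⟨i, j, k, hij, hik, hjk, h1, h2, h3⟩ := h
        obtain ⟨c, hc3, i', j', k', d1, d2, d3, e1, e2, e3⟩ := corner xq' i j k hij hik hjk
        refine ⟨q' ++ [c], by simp [hlen'], ?_, ?_, ?_⟩
        · rw [tmType_append, if_neg hc3, hty']
        · rw [hidxp, tmIndex_append, hty']
          omega
        · left
          rw [hvp, tmVerts_append]
          refine ⟨i', j', k', d1, d2, d3, ?_, ?_, ?_⟩
          · rw [e1, h1, h2]; simp [beyChild]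
          · rw [e2, h2]; simp [beyChild]
          · rw [e3, h3, h2]
            have : beyChild xs 2 0 + beyChild xs 2 2 - beyChild xs 2 1
                = tmMid (xs 0 + xs 2 - xs 1) (xs 2) := by
              simp [beyChild]; exact tmMid_A5 (xs 0) (xs 1) (xs 2)
            rw [this]
      · -- reflW xs xq' 1 0
        obtain ⟨i, j, k, hij, hik, hjk, h1, h2, h3⟩ := h
        obtain ⟨c, hc3, i', j', k', d1, d2, d3, e1, e2, e3⟩ := corner xq' i j k hij hik hjk
        refine ⟨q' ++ [c], by simp [hlen'], ?_, ?_, ?_⟩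
        · rw [tmType_append, if_neg hc3, hty']
        · rw [hidxp, tmIndex_append, hty']
          omega
        · right
          rw [hvp, tmVerts_append]
          refine ⟨i', j', k', d1, d2, d3, ?_, ?_, ?_⟩
          · rw [e1, h1, h2]; simp [beyChild]
          · rw [e2, h2]; simp [beyChild]
          · rw [e3, h3, h2]
            have : beyChild xs 2 1 + beyChild xs 2 2 - beyChild xs 2 0
                = tmMid (xs 1 + xs 2 - xs 0) (xs 2) := by
              simp [beyChild]; exact tmMid_A5 (xs 1) (xs 0) (xs 2)
            rw [this]
    · -- i = 3
      have hb : tmType 0 s = 1 := by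
        rw [tmType_append] at hty; simp at hty
        rcases fin2_cases (tmType 0 s) with h | h
        · rw [h] at hty; exact absurd hty (by decide)
        · exact h
      refine ⟨s ++ [1], by simp [hs], ?_, ?_, ?_⟩
      · rw [tmType_append, hb]; simp
      · rw [tmIndex_append, tmIndex_append, hb]
        have e1 : ((tmChildRank 1 3 : Fin 4) : ℕ) = 1 := rfl
        have e2 : ((tmChildRank 1 1 : Fin 4) : ℕ) = 2 := rfl
        omega
      · left
        rw [hvp, tmVerts_append]
        exact ⟨0, 2, 1, by decide, by decide, by decide,
          by simp [beyChild]; rfl, by simp [beyChild]; rfl,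
          by simp [beyChild]; exact (tmMid_A4 (xs 0) (xs 1) (xs 2)).symm⟩


/-- In a uniform level-`L` refinement of the type-0 root triangle, each level-`L`
subtriangle of type 0 that descends from the level-1 child `T_3` of the root is a
face-neighbor of a level-`L` subtriangle of type 1 that comes strictly later in the
TM order. -/
theorem tm_type0_in_T3_has_later_type1_neighbor (x0 : Fin 3 → TMV)
    (hx0 : AffineIndependent ℝ x0) (L : ℕ)
    (p : List (Fin 4)) (hp : p.length = L) (hty : tmType 0 p = 0)
    (hdesc : ∃ rest : List (Fin 4), p = 3 :: rest) :
    ∃ q : List (Fin 4), q.length = L ∧ tmType 0 q = 1 ∧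
      tmIndex 0 p < tmIndex 0 q ∧ triFaceNbr (tmVerts x0 p) (tmVerts x0 q) := by
  obtain ⟨rest, rfl⟩ := hdesc
  obtain ⟨q, hqlen, hqty, hqidx, hrefl⟩ := tm_main x0 rest hty
  refine ⟨q, ?_, hqty, hqidx, ?_⟩
  · rw [hqlen]; simpa using hp
  · exact faceNbr_of_reflW _ _ (tmVerts_ai hx0 _) hrefl
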